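/- Let A ∈ GL_n(ℂ) and suppose there exists μ ∈ ℂ with M_μ(A ⊗ A) > 1/2. Then there exists λ ∈ ℂ with M_λ(A) > 1/2; moreover such λ and μ are unique, and if λ = 1 then μ = 1. -/

import Mathlib

set_option maxHeartbeats 1000000

open Matrix Kronecker Polynomial Module TensorProduct


lemma charpoly_sub_smul_one {n : Type*} [Fintype n] [DecidableEq n] (M : Matrix n n ℂ) (μ : ℂ) :
    (M - μ • 1).charpoly = M.charpoly.comp (X + C μ) := by
  let φ : ℂ[X] →+* ℂ[X] := eval₂RingHom Polynomial.C (X + C μ)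
  have hcomp : M.charpoly.comp (X + C μ) = φ (M.charmatrix.det) := rfl
  rw [hcomp, RingHom.map_det, Matrix.charpoly]
  congr 1
  ext i j
  by_cases h : i = j
  · subst h
    simp only [charmatrix_apply_eq, RingHom.mapMatrix_apply, Matrix.map_apply, Matrix.sub_apply,
      Matrix.smul_apply, Matrix.one_apply_eq, smul_eq_mul, mul_one, coe_eval₂RingHom, φ]
    simp only [eval₂_sub, eval₂_X, eval₂_C, map_sub]
    ring
  · simp only [RingHom.mapMatrix_apply, Matrix.map_apply, charmatrix_apply_ne _ _ _ h,
      Matrix.sub_apply, Matrix.smul_apply, Matrix.one_apply_ne h, smul_eq_mul, mul_zero, sub_zero,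
      coe_eval₂RingHom, φ]
    simp only [eval₂_neg, eval₂_C]

lemma maxGenEigenspace_sub_smul {V : Type*} [AddCommGroup V] [Module ℂ V]
    (f : Module.End ℂ V) (μ : ℂ) :
    (f - μ • 1).maxGenEigenspace 0 = f.maxGenEigenspace μ := by
  ext x
  simp [Module.End.mem_maxGenEigenspace, zero_smul, sub_zero]

lemma count_charpoly_roots {V : Type*} [AddCommGroup V] [Module ℂ V] [FiniteDimensional ℂ V]
    (f : Module.End ℂ V) (μ : ℂ) :
    f.charpoly.roots.count μ = Module.finrank ℂ (f.maxGenEigenspace μ) := by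
  rw [Polynomial.count_roots, rootMultiplicity_eq_natTrailingDegree,
    ← maxGenEigenspace_sub_smul f μ, LinearMap.finrank_maxGenEigenspace_zero_eq]
  congr 1
  let b := Module.Free.chooseBasis ℂ V
  rw [← LinearMap.charpoly_toMatrix (f - μ • 1) b, ← LinearMap.charpoly_toMatrix f b]
  have : LinearMap.toMatrix b b (f - μ • 1) = LinearMap.toMatrix b b f - μ • 1 := by
    rw [map_sub, _root_.map_smul, LinearMap.toMatrix_one]
  rw [this, charpoly_sub_smul_one]

lemma tmul_mem_maxGenEigenspace {V W : Type*} [AddCommGroup V] [Module ℂ V]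
    [AddCommGroup W] [Module ℂ W]
    (f : Module.End ℂ V) (g : Module.End ℂ W) {a b : ℂ} {x : V} {y : W}
    (hx : x ∈ f.maxGenEigenspace a) (hy : y ∈ g.maxGenEigenspace b) :
    x ⊗ₜ[ℂ] y ∈ Module.End.maxGenEigenspace (TensorProduct.map f g) (a * b) := by
  rw [Module.End.mem_maxGenEigenspace] at hx hy ⊢
  obtain ⟨p, hp⟩ := hx
  obtain ⟨q, hq⟩ := hy
  refine ⟨p + q, ?_⟩
  set U : Module.End ℂ (V ⊗[ℂ] W) := TensorProduct.map (f - a • 1) g with hU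
  set T : Module.End ℂ (V ⊗[ℂ] W) := TensorProduct.map 1 (g - b • 1) with hT
  have hD : TensorProduct.map f g - (a * b) • 1 = U + a • T := by
    have e1 : TensorProduct.map f g = U + a • TensorProduct.map 1 g := by
      rw [hU, ← TensorProduct.map_smul_left, ← TensorProduct.map_add_left]
      congr 1
      abel
    have e2 : TensorProduct.map (1 : Module.End ℂ V) g
        = T + b • (1 : Module.End ℂ (V ⊗[ℂ] W)) := by
      rw [hT, ← TensorProduct.map_one (R := ℂ) (M := V) (N := W)]
      rw [← TensorProduct.map_smul_right, ← TensorProduct.map_add_right]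
      congr 1
      abel
    rw [e1, e2]
    rw [smul_add, smul_smul]
    abel
  have hcomm : Commute U (a • T) := by
    apply Commute.smul_right
    have hgg : g * (g - b • 1) = (g - b • 1) * g := by
      rw [mul_sub, sub_mul, mul_smul_comm, smul_mul_assoc, mul_one, one_mul]
    show U * T = T * U
    rw [hU, hT, ← TensorProduct.map_mul, ← TensorProduct.map_mul, mul_one, one_mul, hgg]
  rw [hD, hcomm.add_pow]
  rw [LinearMap.coe_sum, Finset.sum_apply]
  refine Finset.sum_eq_zero fun k hk => ?_
  simp only [Finset.mem_range, Nat.lt_succ_iff] at hk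
  rw [Module.End.mul_apply, Module.End.mul_apply]
  have hnat : ((p + q).choose k : Module.End ℂ (V ⊗[ℂ] W)) (x ⊗ₜ[ℂ] y)
      = ((p + q).choose k : ℕ) • (x ⊗ₜ[ℂ] y) := by
    simp [Module.End.natCast_apply]
  rw [hnat, map_nsmul, map_nsmul]
  suffices h0 : (U ^ k) (((a • T) ^ (p + q - k)) (x ⊗ₜ[ℂ] y)) = 0 by
    rw [h0, smul_zero]
  rcases le_or_gt p k with h | h
  · have hUk : U ^ k = TensorProduct.map ((f - a • 1) ^ k) (g ^ k) := by
      rw [hU, TensorProduct.map_pow]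
    have hx0 : ((f - a • 1) ^ k) x = 0 := by
      rw [← Nat.sub_add_cancel h, pow_add, Module.End.mul_apply, hp, map_zero]
    have hTj : ((a • T) ^ (p + q - k)) (x ⊗ₜ[ℂ] y)
        = a ^ (p + q - k) • (x ⊗ₜ[ℂ] ((g - b • 1) ^ (p + q - k)) y) := by
      rw [_root_.smul_pow, LinearMap.smul_apply, hT, TensorProduct.map_pow,
        TensorProduct.map_tmul, one_pow, Module.End.one_apply]
    rw [hTj, LinearMap.map_smul, hUk, TensorProduct.map_tmul, hx0, zero_tmul, smul_zero]
  · have hq0 : ((g - b • 1) ^ (p + q - k)) y = 0 := by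
      have hle : q ≤ p + q - k := by omega
      rw [← Nat.sub_add_cancel hle, pow_add, Module.End.mul_apply, hq, map_zero]
    have hTj : ((a • T) ^ (p + q - k)) (x ⊗ₜ[ℂ] y) = 0 := by
      rw [_root_.smul_pow, LinearMap.smul_apply, hT, TensorProduct.map_pow,
        TensorProduct.map_tmul, hq0, tmul_zero, smul_zero]
    rw [hTj, map_zero]

lemma count_map_univ {α β : Type*} [Fintype α] [DecidableEq β] (F : α → β) (μ : β) :
    ((Finset.univ.val : Multiset α).map F).count μ = Fintype.card {x // F x = μ} := by
  classical
  rw [Multiset.count_map, Fintype.card_subtype]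
  rw [← Finset.filter_val]
  congr 1
  simp [eq_comm]

lemma card_roots_charpoly {m : Type*} [Fintype m] [DecidableEq m] (M : Matrix m m ℂ) :
    M.charpoly.roots.card = Fintype.card m := by
  rw [Polynomial.splits_iff_card_roots.mp (IsAlgClosed.splits M.charpoly),
    Matrix.charpoly_natDegree_eq_dim]

lemma card_le_finrank_of_basis_mem {V : Type*} [AddCommGroup V] [Module ℂ V]
    [FiniteDimensional ℂ V] {ι : Type*} [Fintype ι] (b : Basis ι ℂ V)
    (N : Submodule ℂ V) (P : ι → Prop) [DecidablePred P] (hmem : ∀ i, P i → b i ∈ N) :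
    Fintype.card {i // P i} ≤ Module.finrank ℂ N := by
  have hli : LinearIndependent ℂ
      (fun p : {i // P i} => (⟨b p.1, hmem p.1 p.2⟩ : N)) := by
    apply LinearIndependent.of_comp N.subtype
    exact b.linearIndependent.comp Subtype.val Subtype.val_injective
  exact hli.fintype_card_le_finrank

lemma exists_adapted_basis {V : Type} [AddCommGroup V] [Module ℂ V] [FiniteDimensional ℂ V]
    (f : Module.End ℂ V) :
    ∃ (ι : Type) (_ : Fintype ι) (b : Basis ι ℂ V) (d : ι → ℂ),
      (∀ i, b i ∈ f.maxGenEigenspace (d i)) ∧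
      ∀ c : ℂ, ((Finset.univ.val : Multiset ι).map d).count c
        = Module.finrank ℂ (f.maxGenEigenspace c) := by
  classical
  have hI : DirectSum.IsInternal f.maxGenEigenspace :=
    DirectSum.isInternal_submodule_of_iSupIndep_of_iSup_eq_top
      (f.independent_maxGenEigenspace) (f.iSup_maxGenEigenspace_eq_top)
  let β : ℂ → Type _ := fun c => Module.Free.ChooseBasisIndex ℂ (f.maxGenEigenspace c)
  let v : ∀ c, Basis (β c) ℂ (f.maxGenEigenspace c) := fun c => Module.Free.chooseBasis ℂ _
  let b : Basis (Σ c : ℂ, β c) ℂ V := hI.collectedBasis v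
  haveI : Fintype (Σ c : ℂ, β c) := FiniteDimensional.fintypeBasisIndex b
  refine ⟨Σ c : ℂ, β c, inferInstance, b, Sigma.fst, fun i => hI.collectedBasis_mem v i, ?_⟩
  intro c
  rw [count_map_univ, finrank_eq_card_chooseBasisIndex]
  apply Fintype.card_congr
  exact
    { toFun := fun k => cast (congrArg β k.2) k.1.2
      invFun := fun i => ⟨⟨c, i⟩, rfl⟩
      left_inv := by rintro ⟨⟨c', i⟩, h⟩; subst h; rfl
      right_inv := fun i => rfl }

lemma kron_charpoly_roots {n : ℕ} (A : Matrix (Fin n) (Fin n) ℂ) :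
    (A ⊗ₖ A).charpoly.roots
      = A.charpoly.roots.bind (fun a => A.charpoly.roots.map (a * ·)) := by
  classical
  let bf := Pi.basisFun ℂ (Fin n)
  set f : Module.End ℂ (Fin n → ℂ) := Matrix.toLin bf bf A with hf
  have hfA : f.charpoly = A.charpoly := by
    rw [← LinearMap.charpoly_toMatrix f bf, hf, LinearMap.toMatrix_toLin]
  set g : Module.End ℂ (TensorProduct ℂ (Fin n → ℂ) (Fin n → ℂ)) := TensorProduct.map f f
    with hg
  have hgA : g.charpoly = (A ⊗ₖ A).charpoly := by
    rw [← LinearMap.charpoly_toMatrix g (bf.tensorProduct bf), hg,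
      TensorProduct.toMatrix_map, hf, LinearMap.toMatrix_toLin]
  obtain ⟨ι, _, b, d, hmem, hcount⟩ := exists_adapted_basis f
  clear_value f
  clear hf
  have hR : (Finset.univ.val).map d = A.charpoly.roots := by
    refine Multiset.ext.mpr fun c => ?_
    rw [hcount c, ← hfA, count_charpoly_roots]
  set F : ι × ι → ℂ := fun p => d p.1 * d p.2 with hF
  have hmem2 : ∀ p : ι × ι, (b.tensorProduct b) p ∈ g.maxGenEigenspace (F p) := by
    rintro ⟨k, l⟩
    rw [Basis.tensorProduct_apply, hg]
    exact tmul_mem_maxGenEigenspace f f (hmem k) (hmem l)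
  have hle : ∀ μ : ℂ,
      ((Finset.univ.val).map F).count μ ≤ (A ⊗ₖ A).charpoly.roots.count μ := by
    intro μ
    rw [count_map_univ, ← hgA, count_charpoly_roots]
    refine card_le_finrank_of_basis_mem (b.tensorProduct b) _ _ fun p hp => ?_
    rw [← hp]; exact hmem2 p
  have hn : Fintype.card ι = n := by
    have h := congrArg Multiset.card hR
    rwa [Multiset.card_map, card_roots_charpoly, Fintype.card_fin] at h
  have hcard : ((Finset.univ.val).map F).card = (A ⊗ₖ A).charpoly.roots.card := by
    rw [Multiset.card_map, card_roots_charpoly]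
    simp [hn]
  have hKey : (Finset.univ.val).map F = (A ⊗ₖ A).charpoly.roots :=
    Multiset.eq_of_le_of_card_le (Multiset.le_iff_count.mpr hle) (le_of_eq hcard.symm)
  rw [← hKey, ← hR]
  have huniv : (Finset.univ.val : Multiset (ι × ι))
      = (Finset.univ.val : Multiset ι).bind
          (fun k => (Finset.univ.val : Multiset ι).map (Prod.mk k)) := by
    rw [← Finset.univ_product_univ, Finset.product_val]; rfl
  rw [huniv, Multiset.map_bind, Multiset.bind_map]
  simp only [Multiset.map_map, Function.comp, hF]

lemma count_add_count_le_card {α : Type*} [DecidableEq α] {R : Multiset α} {x y : α}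
    (h : x ≠ y) : R.count x + R.count y ≤ Multiset.card R := by
  have hle : Multiset.replicate (R.count x) x + Multiset.replicate (R.count y) y ≤ R := by
    rw [Multiset.le_iff_count]
    intro a
    rw [Multiset.count_add, Multiset.count_replicate, Multiset.count_replicate]
    split_ifs with h1 h2 h2 <;>
      first
        | exact absurd (h1.trans h2.symm) h
        | simp_all
  simpa using Multiset.card_le_card hle

lemma multiset_combinatorics (R : Multiset ℂ) (n : ℕ) (hcard : Multiset.card R = n)
    (h0 : (0:ℂ) ∉ R) (μ : ℂ)
    (hμ : n * n < 2 * ((R.bind fun a => R.map (a * ·)).count μ)) :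
    ∃ l : ℂ, (n < 2 * R.count l) ∧ (∀ l', n < 2 * R.count l' → l' = l) ∧ μ = l * l := by
  classical
  have hcnt : ∀ a ∈ R, (R.map (a * ·)).count μ = R.count (a⁻¹ * μ) := by
    intro a ha
    have ha0 : a ≠ 0 := fun h => h0 (h ▸ ha)
    have hme : μ = a * (a⁻¹ * μ) := by field_simp
    rw [hme, Multiset.count_map_eq_count' _ _ (mul_right_injective₀ ha0), ← hme]
  have hsum : (R.bind fun a => R.map (a * ·)).count μ
      = (R.map fun a => R.count (a⁻¹ * μ)).sum := by
    rw [Multiset.count_bind]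
    exact congrArg _ (Multiset.map_congr rfl hcnt)
  have hex : ∃ l : ℂ, n < 2 * R.count l := by
    by_contra hall
    push_neg at hall
    have h2 : (R.map fun a => 2 * R.count (a⁻¹ * μ)).sum ≤ (R.map fun _ => n).sum :=
      Multiset.sum_map_le_sum_map _ _ (fun a _ => hall _)
    rw [Multiset.map_const', Multiset.sum_replicate, smul_eq_mul, hcard,
      Multiset.sum_map_mul_left] at h2
    rw [hsum] at hμ
    omega
  obtain ⟨l, hl⟩ := hex
  have huniq : ∀ l', n < 2 * R.count l' → l' = l := by
    intro l' hl'
    by_contra hne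
    have := count_add_count_le_card (R := R) hne
    omega
  refine ⟨l, hl, huniq, ?_⟩
  by_contra hmul
  have hl0 : l ≠ 0 := by
    intro h
    exact h0 (h ▸ Multiset.count_pos.mp (by omega))
  set m := R.count l with hm
  have hmn : m ≤ n := hcard ▸ Multiset.count_le_card l R
  set β := l⁻¹ * μ with hβ
  set t := R.count β with ht
  have hβl : β ≠ l := by
    intro h
    apply hmul
    rw [hβ] at h
    field_simp at h
    first
      | linear_combination h
      | linear_combination -h
      | exact h
      | exact h.symm
  set R₁ := R.filter (fun x => ¬ x = l) with hR₁
  have hsplit : R = Multiset.replicate m l + R₁ := by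
    rw [hm, ← Multiset.filter_eq', hR₁]
    exact (Multiset.filter_add_not _ _).symm
  set R₂ := R₁.filter (fun x => ¬ x = β) with hR₂
  have ht1 : R₁.count β = t := by
    rw [hR₁, Multiset.count_filter]
    simp [hβl, ht]
  have hsplit2 : R₁ = Multiset.replicate t β + R₂ := by
    rw [← ht1, ← Multiset.filter_eq', hR₂]
    exact (Multiset.filter_add_not _ _).symm
  have hcard1 : Multiset.card R₁ = n - m := by
    have h := congrArg Multiset.card hsplit
    rw [Multiset.card_add, Multiset.card_replicate, hcard] at h
    omega
  have hcard2 : Multiset.card R₂ = n - m - t := by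
    have h := congrArg Multiset.card hsplit2
    rw [Multiset.card_add, Multiset.card_replicate, hcard1] at h
    omega
  have hr_le : ∀ x : ℂ, x ≠ l → R.count x ≤ n - m := by
    intro x hx
    have := count_add_count_le_card (R := R) hx
    omega
  have hboundgen : ∀ s : Multiset ℂ,
      s = Multiset.replicate m l + (Multiset.replicate t β + R₂) →
      (s.map fun a => R.count (a⁻¹ * μ)).sum
        ≤ m * t + t * m + (n - m - t) * (n - m) := by
    rintro s rfl
    rw [Multiset.map_add, Multiset.map_add, Multiset.sum_add, Multiset.sum_add]
    have e1 : ((Multiset.replicate m l).map fun a => R.count (a⁻¹ * μ)).sum = m * t := by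
      rw [Multiset.map_replicate, Multiset.sum_replicate, smul_eq_mul]
    have e2 : ((Multiset.replicate t β).map fun a => R.count (a⁻¹ * μ)).sum ≤ t * m := by
      rw [Multiset.map_replicate, Multiset.sum_replicate, smul_eq_mul]
      rcases Nat.eq_zero_or_pos t with h | h
      · simp [h]
      · have hβR : β ∈ R := Multiset.count_pos.mp (by omega)
        have hβ0 : β ≠ 0 := fun hh => h0 (hh ▸ hβR)
        have hμ0 : μ ≠ 0 := by
          intro hh
          apply hβ0
          rw [hβ, hh, mul_zero]
        have e : β⁻¹ * μ = l := by
          rw [hβ]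
          field_simp
        rw [e]
    have e3 : (R₂.map fun a => R.count (a⁻¹ * μ)).sum ≤ (n - m - t) * (n - m) := by
      calc (R₂.map fun a => R.count (a⁻¹ * μ)).sum
          ≤ (R₂.map fun _ => n - m).sum := by
            apply Multiset.sum_map_le_sum_map
            intro a ha
            apply hr_le
            intro hh
            have ha1 : a ∈ R₁ := Multiset.mem_of_mem_filter ha
            have haβ : ¬ a = β := by simpa using Multiset.of_mem_filter ha
            have haR : a ∈ R := Multiset.mem_of_mem_filter ha1
            have ha0 : a ≠ 0 := fun h2 => h0 (h2 ▸ haR)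
            have hμa : μ = a * l := by rw [← hh]; field_simp
            apply haβ
            rw [hβ, hμa]
            field_simp
            try ring
          _ = (n - m - t) * (n - m) := by
            rw [Multiset.map_const', Multiset.sum_replicate, smul_eq_mul, hcard2]
    omega
  have hbound := hboundgen R (by rw [hsplit, hsplit2])
  rw [hsum] at hμ
  have htn : t ≤ n - m := hr_le β hβl
  obtain ⟨r, hr⟩ : ∃ r, n - m = r := ⟨_, rfl⟩
  obtain ⟨u, hu⟩ : ∃ u, r - t = u := ⟨_, rfl⟩
  have hrm : r < m := by omega
  have hZ : 2 * ((m:ℤ) * t + t * m + u * r) ≤ (n:ℤ) * n := by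
    have h1 : (n:ℤ) = m + t + u := by exact_mod_cast (by omega : n = m + t + u)
    have h2 : (u:ℤ) ≤ m := by exact_mod_cast (by omega : u ≤ m)
    have h3 : (r:ℤ) = t + u := by exact_mod_cast (by omega : r = t + u)
    nlinarith [sq_nonneg ((m:ℤ) - t), mul_nonneg (by positivity : (0:ℤ) ≤ (u:ℤ))
      (sub_nonneg.mpr h2)]
  have hfin : 2 * (m * t + t * m + u * r) ≤ n * n := by exact_mod_cast hZ
  rw [hr, hu] at hbound
  omega


theorem exists_unique_large_multiplicity {n : ℕ} (A : Matrix (Fin n) (Fin n) ℂ)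
    (hA : IsUnit A) (μ : ℂ)
    (hμ : n ^ 2 < 2 * (A ⊗ₖ A).charpoly.roots.count μ) :
    ∃ l : ℂ, n < 2 * A.charpoly.roots.count l ∧
      (∀ l' : ℂ, n < 2 * A.charpoly.roots.count l' → l' = l) ∧
      (∀ μ' : ℂ, n ^ 2 < 2 * (A ⊗ₖ A).charpoly.roots.count μ' → μ' = μ) ∧
      (l = 1 → μ = 1) := by
  classical
  have hK := kron_charpoly_roots A
  have hcardR : Multiset.card A.charpoly.roots = n := by
    rw [card_roots_charpoly, Fintype.card_fin]
  have h0 : (0:ℂ) ∉ A.charpoly.roots := by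
    intro h
    have hc0 : A.charpoly.coeff 0 = 0 := by
      have h1 := Polynomial.isRoot_of_mem_roots h
      rwa [Polynomial.IsRoot.def, ← Polynomial.coeff_zero_eq_eval_zero] at h1
    have hdet : A.det = 0 := by
      rw [Matrix.det_eq_sign_charpoly_coeff, hc0, mul_zero]
    have hu := (Matrix.isUnit_iff_isUnit_det A).mp hA
    rw [hdet] at hu
    exact (by simp : ¬ IsUnit (0:ℂ)) hu
  have hμ2 : n * n < 2 *
      ((A.charpoly.roots.bind fun a => A.charpoly.roots.map (a * ·)).count μ) := by
    rw [← hK]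
    calc n * n = n ^ 2 := (sq n).symm
      _ < 2 * (A ⊗ₖ A).charpoly.roots.count μ := hμ
  obtain ⟨l, hl, huniq, hml⟩ := multiset_combinatorics _ n hcardR h0 μ hμ2
  refine ⟨l, hl, huniq, ?_, ?_⟩
  · intro μ' hμ'
    by_contra hne
    have hcardK : Multiset.card (A ⊗ₖ A).charpoly.roots = n ^ 2 := by
      rw [card_roots_charpoly, Fintype.card_prod, Fintype.card_fin, sq]
    have := count_add_count_le_card (R := (A ⊗ₖ A).charpoly.roots) hne
    omega
  · intro hl1
    rw [hml, hl1, one_mul]
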